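/- Let (R,B) be a ℤ-based rng and B' ⊆ B a closed subset, and write e = Σ_{b∈B} e_b·b for the identity of R_ℂ. Then the element e' := Σ_{b∈B'} e_b·b satisfies e'·r = r for every r in the ℂ-span of B' inside R_ℂ; consequently the subring of R spanned by B', together with the restrictions of ~ and τ, is itself a ℤ-based rng. -/

import Mathlib

open scoped BigOperators

/-- The purely combinatorial data of a `ℤ`-based rng on an index set `ι`:
structure constants `N`, the coordinates `e` of the identity of the
complexification, and the basis involution `σ`, subject to the axioms of a
`ℤ`-based rng. -/
structure IsZBasedRngData {ι : Type*} [Fintype ι] [DecidableEq ι]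
    (N : ι → ι → ι → ℤ) (e : ι → ℂ) (σ : ι → ι) : Prop where
  comm : ∀ i j m, N i j m = N j i m
  assoc : ∀ i j k m, (∑ l, N i j l * N l k m) = ∑ l, N j k l * N i l m
  one : ∀ j m, (∑ i, e i * (N i j m : ℂ)) = if j = m then (1 : ℂ) else 0
  invol : ∀ i, σ (σ i) = i
  conjN : ∀ i j m, N (σ i) (σ j) m = N i j (σ m)
  tau : ∀ i j, (∑ m, (starRingEnd ℂ) (e m) * (N (σ i) j m : ℂ)) =
    if i = j then (1 : ℂ) else 0
  conje : ∀ j, (starRingEnd ℂ) (e (σ j)) = e j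

section Aux

variable {n : ℕ} {A : Type*} [CommRing A] [Algebra ℂ A]
  (b : Module.Basis (Fin n) ℂ A) (N : Fin n → Fin n → Fin n → ℤ) (σ : Fin n → Fin n)

lemma aux_c_basis_mul
    (hmul : ∀ i j, b i * b j = ∑ m, (N i j m : ℂ) • b m) (i j m : Fin n) :
    b.equivFun (b i * b j) m = N i j m := by
  rw [hmul, map_sum, Finset.sum_apply]
  have : ∀ k : Fin n, (b.equivFun ((N i j k : ℂ) • b k)) m
      = (N i j k : ℂ) * (if k = m then 1 else 0) := by
    intro k
    rw [map_smul]
    simp [Module.Basis.equivFun_self, Pi.smul_apply, Finsupp.single_apply, mul_ite]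
  simp_rw [this]
  simp

lemma aux_c_mul
    (hmul : ∀ i j, b i * b j = ∑ m, (N i j m : ℂ) • b m) (x y : A) (m : Fin n) :
    b.equivFun (x * y) m
      = ∑ k, ∑ i, b.equivFun x k * b.equivFun y i * N k i m := by
  conv_lhs => rw [← b.sum_equivFun x, ← b.sum_equivFun y]
  rw [Finset.sum_mul_sum]
  rw [map_sum, Finset.sum_apply]
  refine Finset.sum_congr rfl fun k _ => ?_
  rw [map_sum, Finset.sum_apply]
  refine Finset.sum_congr rfl fun i _ => ?_
  rw [smul_mul_smul_comm, map_smul]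
  rw [Pi.smul_apply, aux_c_basis_mul b N hmul, smul_eq_mul]

lemma aux_comm
    (hmul : ∀ i j, b i * b j = ∑ m, (N i j m : ℂ) • b m) (i j m : Fin n) :
    N i j m = N j i m := by
  have h : b.equivFun (b i * b j) m = b.equivFun (b j * b i) m := by rw [mul_comm]
  rw [aux_c_basis_mul b N hmul, aux_c_basis_mul b N hmul] at h
  exact_mod_cast h

lemma aux_tau' (hσ : ∀ i, σ (σ i) = i)
    (hτ : ∀ i j, (∑ m, (starRingEnd ℂ) (b.repr 1 m) * (N (σ i) j m : ℂ)) =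
      if i = j then (1 : ℂ) else 0) (k m' : Fin n) :
    (∑ mm, (starRingEnd ℂ) (b.repr 1 mm) * (N k m' mm : ℂ))
      = if σ k = m' then 1 else 0 := by
  have := hτ (σ k) m'
  rwa [hσ] at this

lemma aux_sigma_inj (hσ : ∀ i, σ (σ i) = i) {k m : Fin n} (h : σ k = σ m) : k = m := by
  have := congrArg σ h
  rwa [hσ, hσ] at this

lemma aux_t2
    (hmul : ∀ i j, b i * b j = ∑ m, (N i j m : ℂ) • b m)
    (hσ : ∀ i, σ (σ i) = i)
    (hτ : ∀ i j, (∑ m, (starRingEnd ℂ) (b.repr 1 m) * (N (σ i) j m : ℂ)) =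
      if i = j then (1 : ℂ) else 0) (x y m' : Fin n) :
    (N x y m' : ℂ)
      = ∑ mm, (starRingEnd ℂ) (b.repr 1 mm) * b.equivFun (b x * b y * b (σ m')) mm := by
  have step : ∀ mm, b.equivFun (b x * b y * b (σ m')) mm
      = ∑ k, (N x y k : ℂ) * N k (σ m') mm := by
    intro mm
    rw [aux_c_mul b N hmul]
    refine Finset.sum_congr rfl fun k _ => ?_
    rw [Finset.sum_eq_single (σ m')]
    · rw [aux_c_basis_mul b N hmul, Module.Basis.equivFun_self]
      simp
    · intro i _ hi
      rw [Module.Basis.equivFun_self]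
      simp [Ne.symm hi]
    · simp
  simp_rw [step, Finset.mul_sum]
  rw [Finset.sum_comm]
  have : ∀ k : Fin n,
      (∑ mm, (starRingEnd ℂ) (b.repr 1 mm) * ((N x y k : ℂ) * (N k (σ m') mm : ℂ)))
        = (N x y k : ℂ) * (if σ k = σ m' then 1 else 0) := by
    intro k
    rw [← aux_tau' b N σ hσ hτ k (σ m')]
    rw [Finset.mul_sum]
    refine Finset.sum_congr rfl fun mm _ => by ring
  simp_rw [this]
  rw [Finset.sum_eq_single m']
  · simp
  · intro k _ hk
    have : ¬ (σ k = σ m') := fun h => hk (aux_sigma_inj σ hσ h)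
    simp [this]
  · simp

lemma aux_hkey
    (hmul : ∀ i j, b i * b j = ∑ m, (N i j m : ℂ) • b m)
    (hσ : ∀ i, σ (σ i) = i)
    (hτ : ∀ i j, (∑ m, (starRingEnd ℂ) (b.repr 1 m) * (N (σ i) j m : ℂ)) =
      if i = j then (1 : ℂ) else 0) (i j m : Fin n) :
    N i j m = N (σ m) j (σ i) := by
  have h1 := aux_t2 b N σ hmul hσ hτ i j m
  have h2 := aux_t2 b N σ hmul hσ hτ (σ m) j (σ i)
  rw [hσ] at h2
  have hprod : b i * b j * b (σ m) = b (σ m) * b j * b i := by ring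
  rw [hprod] at h1
  rw [← h2] at h1
  exact_mod_cast h1

lemma aux_W
    (hmul : ∀ i j, b i * b j = ∑ m, (N i j m : ℂ) • b m)
    (hσ : ∀ i, σ (σ i) = i)
    (hσN : ∀ i j m, N (σ i) (σ j) m = N i j (σ m))
    (hτ : ∀ i j, (∑ m, (starRingEnd ℂ) (b.repr 1 m) * (N (σ i) j m : ℂ)) =
      if i = j then (1 : ℂ) else 0) (k i j : Fin n) :
    N k i j = N (σ k) j i := by
  have h1 : N k i j = N (σ j) i (σ k) := aux_hkey b N σ hmul hσ hτ k i j
  have h2 : N (σ j) i (σ k) = N j (σ i) (σ (σ k)) := by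
    conv_lhs => rw [← hσ i]
    exact hσN j (σ i) (σ k)
  rw [hσ] at h2
  have h3 : N j (σ i) k = N (σ i) j k := aux_comm b N hmul j (σ i) k
  have h4 : N (σ i) j k = N (σ k) j (σ (σ i)) := aux_hkey b N σ hmul hσ hτ (σ i) j k
  rw [hσ] at h4
  rw [h1, h2, h3, h4]



noncomputable def auxInn (b : Module.Basis (Fin n) ℂ A) (x y : A) : ℂ :=
  ∑ m, (starRingEnd ℂ) (b.equivFun x m) * b.equivFun y m

noncomputable def auxSt (b : Module.Basis (Fin n) ℂ A) (σ : Fin n → Fin n) (x : A) : A :=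
  b.equivFun.symm (fun k => (starRingEnd ℂ) (b.equivFun x (σ k)))

lemma auxSt_c (x : A) (k : Fin n) :
    b.equivFun (auxSt b σ x) k = (starRingEnd ℂ) (b.equivFun x (σ k)) := by
  unfold auxSt
  rw [b.equivFun.apply_symm_apply]

lemma auxInn_zero_right (x : A) : auxInn b x 0 = 0 := by
  unfold auxInn; simp

lemma aux_F1 (x : A) (h : auxInn b x x = 0) : x = 0 := by
  unfold auxInn at h
  have h' : ∀ m : Fin n, (starRingEnd ℂ) (b.equivFun x m) * b.equivFun x m
      = (Complex.normSq (b.equivFun x m) : ℂ) := by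
    intro m
    rw [Complex.normSq_eq_conj_mul_self]
  simp_rw [h'] at h
  rw [← Complex.ofReal_sum] at h
  rw [Complex.ofReal_eq_zero] at h
  have hz : ∀ m ∈ Finset.univ, Complex.normSq (b.equivFun x m) = 0 := by
    rw [← Finset.sum_eq_zero_iff_of_nonneg (fun m _ => Complex.normSq_nonneg _)]
    exact h
  have : b.equivFun x = 0 := by
    funext m
    exact Complex.normSq_eq_zero.mp (hz m (Finset.mem_univ m))
  have := congrArg b.equivFun.symm this
  rwa [b.equivFun.symm_apply_apply, map_zero] at this

lemma aux_st_st (hσ : ∀ i, σ (σ i) = i) (x : A) : auxSt b σ (auxSt b σ x) = x := by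
  apply b.equivFun.injective
  funext k
  rw [auxSt_c, auxSt_c, hσ, Complex.conj_conj]

lemma aux_st_one (hσ : ∀ i, σ (σ i) = i)
    (he : ∀ j, (starRingEnd ℂ) (b.repr 1 (σ j)) = b.repr 1 j) :
    auxSt b σ (1 : A) = 1 := by
  apply b.equivFun.injective
  funext k
  rw [auxSt_c]
  simpa [Module.Basis.equivFun_apply] using he k

lemma aux_st_sub (hσ : ∀ i, σ (σ i) = i)
    (he : ∀ j, (starRingEnd ℂ) (b.repr 1 (σ j)) = b.repr 1 j) (v : A) (μ : ℂ) :
    auxSt b σ (v - μ • 1) = auxSt b σ v - (starRingEnd ℂ) μ • 1 := by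
  apply b.equivFun.injective
  funext k
  have h1 : b.equivFun (v - μ • 1) (σ k) = b.equivFun v (σ k) - μ * b.equivFun 1 (σ k) := by
    rw [map_sub, map_smul]
    simp
  have h2 : b.equivFun (auxSt b σ v - (starRingEnd ℂ) μ • 1) k
      = b.equivFun (auxSt b σ v) k - (starRingEnd ℂ) μ * b.equivFun 1 k := by
    rw [map_sub, map_smul]
    simp
  rw [h2, auxSt_c, auxSt_c, h1, map_sub, map_mul]
  congr 1
  have h3 : (starRingEnd ℂ) (b.equivFun 1 (σ k)) = b.equivFun 1 k := by
    simpa [Module.Basis.equivFun_apply] using he k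
  rw [h3]

lemma aux_F2
    (hmul : ∀ i j, b i * b j = ∑ m, (N i j m : ℂ) • b m)
    (hσ : ∀ i, σ (σ i) = i)
    (hσN : ∀ i j m, N (σ i) (σ j) m = N i j (σ m))
    (hτ : ∀ i j, (∑ m, (starRingEnd ℂ) (b.repr 1 m) * (N (σ i) j m : ℂ)) =
      if i = j then (1 : ℂ) else 0)
    (a x y : A) :
    auxInn b (a * x) y = auxInn b x (auxSt b σ a * y) := by
  have hbij : Function.Bijective σ := Function.Involutive.bijective hσ
  unfold auxInn
  have hL : ∀ m, (starRingEnd ℂ) (b.equivFun (a * x) m) * b.equivFun y m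
      = ∑ k, ∑ i, (starRingEnd ℂ) (b.equivFun a k) * (starRingEnd ℂ) (b.equivFun x i)
          * (N k i m : ℂ) * b.equivFun y m := by
    intro m
    rw [aux_c_mul b N hmul, map_sum, Finset.sum_mul]
    refine Finset.sum_congr rfl fun k _ => ?_
    rw [map_sum, Finset.sum_mul]
    refine Finset.sum_congr rfl fun i _ => ?_
    rw [map_mul, map_mul, map_intCast]
  have hR : ∀ m, (starRingEnd ℂ) (b.equivFun x m) * b.equivFun (auxSt b σ a * y) m
      = ∑ k, ∑ i, (starRingEnd ℂ) (b.equivFun x m) *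
          ((starRingEnd ℂ) (b.equivFun a (σ k)) * b.equivFun y i * (N k i m : ℂ)) := by
    intro m
    rw [aux_c_mul b N hmul, Finset.mul_sum]
    refine Finset.sum_congr rfl fun k _ => ?_
    rw [Finset.mul_sum]
    refine Finset.sum_congr rfl fun i _ => ?_
    rw [auxSt_c]
  simp_rw [hL, hR]
  rw [Finset.sum_comm]
  conv_rhs => rw [Finset.sum_comm]
  refine Fintype.sum_equiv (Function.Involutive.toPerm σ (show Function.Involutive σ from hσ)) _ _ fun k => ?_
  simp only [Function.Involutive.coe_toPerm]
  rw [hσ k]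
  have hterm : ∀ m i : Fin n,
      (starRingEnd ℂ) (b.equivFun a k) * (starRingEnd ℂ) (b.equivFun x i)
        * (N k i m : ℂ) * b.equivFun y m
      = (starRingEnd ℂ) (b.equivFun x i) *
        ((starRingEnd ℂ) (b.equivFun a k) * b.equivFun y m * (N (σ k) m i : ℂ)) := by
    intro m i
    have hw : ((N (σ k) m i : ℤ) : ℂ) = ((N k i m : ℤ) : ℂ) := by
      exact_mod_cast congrArg (Int.cast : ℤ → ℂ) (aux_W b N σ hmul hσ hσN hτ k i m).symm
    rw [hw]; ring
  calc ∑ m, ∑ i, (starRingEnd ℂ) (b.equivFun a k) * (starRingEnd ℂ) (b.equivFun x i)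
        * (N k i m : ℂ) * b.equivFun y m
      = ∑ m, ∑ i, (starRingEnd ℂ) (b.equivFun x i) *
        ((starRingEnd ℂ) (b.equivFun a k) * b.equivFun y m * (N (σ k) m i : ℂ)) := by
        exact Finset.sum_congr rfl fun m _ => Finset.sum_congr rfl fun i _ => hterm m i
    _ = ∑ m, ∑ i, (starRingEnd ℂ) (b.equivFun x m) *
        ((starRingEnd ℂ) (b.equivFun a k) * b.equivFun y i * (N (σ k) i m : ℂ)) :=
        Finset.sum_comm

lemma aux_K1
    (hmul : ∀ i j, b i * b j = ∑ m, (N i j m : ℂ) • b m)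
    (hσ : ∀ i, σ (σ i) = i)
    (hσN : ∀ i j m, N (σ i) (σ j) m = N i j (σ m))
    (hτ : ∀ i j, (∑ m, (starRingEnd ℂ) (b.repr 1 m) * (N (σ i) j m : ℂ)) =
      if i = j then (1 : ℂ) else 0)
    (w x : A) (h : w * x = 0) : auxSt b σ w * x = 0 := by
  apply aux_F1 b
  have h2 := aux_F2 b N σ hmul hσ hσN hτ (auxSt b σ w) x (auxSt b σ w * x)
  rw [aux_st_st b σ hσ] at h2
  rw [h2]
  have h3 : w * (auxSt b σ w * x) = auxSt b σ w * (w * x) := by ring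
  rw [h3, h, mul_zero, auxInn_zero_right]

lemma aux_K2
    (hmul : ∀ i j, b i * b j = ∑ m, (N i j m : ℂ) • b m)
    (hσ : ∀ i, σ (σ i) = i)
    (hσN : ∀ i j m, N (σ i) (σ j) m = N i j (σ m))
    (hτ : ∀ i j, (∑ m, (starRingEnd ℂ) (b.repr 1 m) * (N (σ i) j m : ℂ)) =
      if i = j then (1 : ℂ) else 0)
    (w x : A) (h : w * (w * x) = 0) : w * x = 0 := by
  have h1 : auxSt b σ w * (w * x) = 0 := aux_K1 b N σ hmul hσ hσN hτ w (w * x) h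
  apply aux_F1 b
  have h2 := aux_F2 b N σ hmul hσ hσN hτ w x (w * x)
  rw [h2, h1, auxInn_zero_right]

lemma aux_K3
    (hmul : ∀ i j, b i * b j = ∑ m, (N i j m : ℂ) • b m)
    (hσ : ∀ i, σ (σ i) = i)
    (hσN : ∀ i j m, N (σ i) (σ j) m = N i j (σ m))
    (hτ : ∀ i j, (∑ m, (starRingEnd ℂ) (b.repr 1 m) * (N (σ i) j m : ℂ)) =
      if i = j then (1 : ℂ) else 0)
    (w : A) : ∀ (k : ℕ) (x : A), w ^ (k + 1) * x = 0 → w * x = 0 := by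
  intro k
  induction k with
  | zero => intro x hx; rwa [pow_one] at hx
  | succ k ih =>
    intro x hx
    have h1 : w ^ (k + 1) * (w * x) = 0 := by
      rw [show w ^ (k+1) * (w * x) = w ^ (k+2) * x by ring]
      exact hx
    exact aux_K2 b N σ hmul hσ hσN hτ w x (ih (w * x) h1)

lemma aux_st_basis (hσ : ∀ i, σ (σ i) = i) (j : Fin n) :
    auxSt b σ (b j) = b (σ j) := by
  apply b.equivFun.injective
  funext k
  rw [auxSt_c, Module.Basis.equivFun_self, Module.Basis.equivFun_self]
  by_cases h : j = σ k
  · have : σ j = k := by rw [h, hσ]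
    simp [h, this, hσ]
  · have h2 : ¬ (σ j = k) := fun hc => h (by rw [← hc, hσ])
    simp [h, h2]

lemma aux_sigma_mem
    (hmul : ∀ i j, b i * b j = ∑ m, (N i j m : ℂ) • b m)
    (hσ : ∀ i, σ (σ i) = i)
    (hσN : ∀ i j m, N (σ i) (σ j) m = N i j (σ m))
    (hτ : ∀ i j, (∑ m, (starRingEnd ℂ) (b.repr 1 m) * (N (σ i) j m : ℂ)) =
      if i = j then (1 : ℂ) else 0)
    (he : ∀ j, (starRingEnd ℂ) (b.repr 1 (σ j)) = b.repr 1 j)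
    (B' : Finset (Fin n))
    (hNz : ∀ i ∈ B', ∀ j ∈ B', ∀ m, m ∉ B' → N i j m = 0)
    {j : Fin n} (hj : j ∈ B') : σ j ∈ B' := by
  classical
  set V := Submodule.span ℂ (⇑b '' ↑B') with hVdef
  have hgen : ∀ i, i ∈ B' → b i ∈ V :=
    fun i hi => Submodule.subset_span ⟨i, by simpa using hi, rfl⟩
  have hbmul : ∀ i ∈ B', ∀ i' ∈ B', b i * b i' ∈ V := by
    intro i hi i' hi'
    rw [hmul]
    refine Submodule.sum_mem _ fun m _ => ?_
    by_cases hm : m ∈ B'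
    · exact Submodule.smul_mem _ _ (hgen m hm)
    · rw [hNz i hi i' hi' m hm]
      simp
  have hgenmul : ∀ i ∈ B', ∀ y ∈ V, b i * y ∈ V := by
    intro i hi y hy
    induction hy using Submodule.span_induction with
    | mem z hz =>
      obtain ⟨i', hi', rfl⟩ := hz
      exact hbmul i hi i' (by simpa using hi')
    | zero => rw [mul_zero]; exact Submodule.zero_mem _
    | add y z _ _ h1 h2 => rw [mul_add]; exact Submodule.add_mem _ h1 h2
    | smul c y _ h1 => rw [mul_smul_comm]; exact Submodule.smul_mem _ _ h1
  have hmulV : ∀ x ∈ V, ∀ y ∈ V, x * y ∈ V := by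
    intro x hx
    induction hx using Submodule.span_induction with
    | mem z hz =>
      obtain ⟨i, hi, rfl⟩ := hz
      exact hgenmul i (by simpa using hi)
    | zero => intro y hy; rw [zero_mul]; exact Submodule.zero_mem _
    | add x z _ _ h1 h2 => intro y hy; rw [add_mul]; exact Submodule.add_mem _ (h1 y hy) (h2 y hy)
    | smul c x _ h1 => intro y hy; rw [smul_mul_assoc]; exact Submodule.smul_mem _ _ (h1 y hy)
  set v := b j with hvdef
  have hvV : v ∈ V := hgen j hj
  have hpowV : ∀ k : ℕ, v ^ (k + 1) ∈ V := by
    intro k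
    induction k with
    | zero => simpa using hvV
    | succ k ih => rw [pow_succ]; exact hmulV _ ih _ hvV
  haveI : FiniteDimensional ℂ A := Module.Finite.of_basis b
  set M : Module.End ℂ A := LinearMap.mulLeft ℂ v with hMdef
  have hMpow : ∀ (w : A) (k : ℕ) (x : A), ((LinearMap.mulLeft ℂ w) ^ k) x = w ^ k * x := by
    intro w k x
    rw [LinearMap.pow_mulLeft, LinearMap.mulLeft_apply]
  set s : Finset ℂ := (minpoly ℂ M).roots.toFinset ∪ {0} with hsdef
  have hs0 : (0 : ℂ) ∈ s := by simp [hsdef]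
  set p : Polynomial ℂ := Lagrange.interpolate s id (fun z => (starRingEnd ℂ) z) with hpdef
  have hinj : Set.InjOn id (↑s : Set ℂ) := Set.injOn_id _
  have hpeval : ∀ z ∈ s, p.eval z = (starRingEnd ℂ) z := by
    intro z hz
    have := Lagrange.eval_interpolate_at_node (fun z => (starRingEnd ℂ) z) hinj hz
    simpa [hpdef] using this
  have hroot : ∀ μ : ℂ, M.HasEigenvalue μ → μ ∈ s := by
    intro μ hμ
    have h1 := Module.End.hasEigenvalue_iff_isRoot.mp hμ
    have hne : minpoly ℂ M ≠ 0 := minpoly.ne_zero (Algebra.IsIntegral.isIntegral (R := ℂ) M)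
    rw [hsdef]
    rw [Finset.mem_union]
    left
    rw [Multiset.mem_toFinset, Polynomial.mem_roots hne]
    exact h1
  have haction : ∀ (μ : ℂ) (x : A), v * x = μ • x →
      ∀ q : Polynomial ℂ, (Polynomial.aeval v q) * x = q.eval μ • x := by
    intro μ x hx q
    have hpw : ∀ k : ℕ, v ^ k * x = μ ^ k • x := by
      intro k
      induction k with
      | zero => simp
      | succ k ih =>
        rw [pow_succ, pow_succ, mul_assoc, hx, mul_smul_comm, ih, smul_smul, mul_comm]
    rw [Polynomial.aeval_eq_sum_range, Polynomial.eval_eq_sum_range]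
    rw [Finset.sum_mul, Finset.sum_smul]
    refine Finset.sum_congr rfl fun i _ => ?_
    rw [smul_mul_assoc, hpw i, smul_smul]
  have hstv : ∀ (μ : ℂ) (x : A), v * x = μ • x →
      auxSt b σ v * x = (starRingEnd ℂ) μ • x := by
    intro μ x hx
    have hw : (v - μ • 1) * x = 0 := by
      rw [sub_mul, smul_mul_assoc, one_mul, hx, sub_self]
    have h1 := aux_K1 b N σ hmul hσ hσN hτ (v - μ • 1) x hw
    rw [aux_st_sub b σ hσ he] at h1
    rw [sub_mul, smul_mul_assoc, one_mul, sub_eq_zero] at h1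
    exact h1
  have heq : auxSt b σ v = Polynomial.aeval v p := by
    set D : Submodule ℂ A :=
      LinearMap.ker (LinearMap.mulLeft ℂ (auxSt b σ v - Polynomial.aeval v p)) with hDdef
    have htople : (⊤ : Submodule ℂ A) ≤ D := by
      rw [← Module.End.iSup_maxGenEigenspace_eq_top M]
      refine iSup_le fun μ => ?_
      intro x hx
      rw [Module.End.mem_maxGenEigenspace] at hx
      obtain ⟨k, hk⟩ := hx
      have hMw : M - μ • (1 : Module.End ℂ A) = LinearMap.mulLeft ℂ (v - μ • 1) := by
        ext z
        simp only [LinearMap.sub_apply, LinearMap.smul_apply, Module.End.one_apply,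
          LinearMap.mulLeft_apply, hMdef, sub_mul, smul_mul_assoc, one_mul]
      rw [hMw, hMpow] at hk
      rcases k with _ | k
      · rw [pow_zero, one_mul] at hk
        rw [hk]
        exact Submodule.zero_mem _
      · have hwx : (v - μ • 1) * x = 0 := aux_K3 b N σ hmul hσ hσN hτ _ k x hk
        have hvx : v * x = μ • x := by
          rw [sub_mul, smul_mul_assoc, one_mul, sub_eq_zero] at hwx
          exact hwx
        by_cases hx0 : x = 0
        · rw [hx0]
          exact Submodule.zero_mem _
        · have hμs : μ ∈ s := by
            apply hroot
            apply Module.End.hasEigenvalue_of_hasEigenvector (x := x)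
            refine ⟨?_, hx0⟩
            rw [Module.End.mem_eigenspace_iff]
            show M x = μ • x
            rw [hMdef, LinearMap.mulLeft_apply]
            exact hvx
          rw [LinearMap.mem_ker, LinearMap.mulLeft_apply, sub_mul, sub_eq_zero]
          rw [hstv μ x hvx, haction μ x hvx p, hpeval μ hμs]
    have h1 : (1 : A) ∈ D := htople trivial
    rw [LinearMap.mem_ker, LinearMap.mulLeft_apply, sub_mul, mul_one, mul_one,
      sub_eq_zero] at h1
    exact h1
  have haev : Polynomial.aeval v p ∈ V := by
    rw [Polynomial.aeval_eq_sum_range]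
    refine Submodule.sum_mem _ fun i hi => ?_
    rcases i with _ | i
    · have hc0 : p.coeff 0 = 0 := by
        rw [Polynomial.coeff_zero_eq_eval_zero]
        simpa using hpeval 0 hs0
      rw [hc0, zero_smul]
      exact Submodule.zero_mem _
    · exact Submodule.smul_mem _ _ (hpowV i)
  have hbσ : b (σ j) ∈ V := by
    rw [← aux_st_basis b σ hσ j]
    rw [show auxSt b σ (b j) = auxSt b σ v from rfl, heq]
    exact haev
  by_contra hns
  have hcoord : ∀ x ∈ V, b.equivFun x (σ j) = 0 := by
    intro x hx
    induction hx using Submodule.span_induction with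
    | mem z hz =>
      obtain ⟨i, hi, rfl⟩ := hz
      rw [Module.Basis.equivFun_self]
      have hne : i ≠ σ j := fun hc => hns (hc ▸ (by simpa using hi))
      simp [hne]
    | zero => simp
    | add x y _ _ h1 h2 =>
      rw [map_add, Pi.add_apply, h1, h2, add_zero]
    | smul c x _ h1 =>
      rw [map_smul, Pi.smul_apply, h1, smul_zero]
  have hone := hcoord (b (σ j)) hbσ
  rw [Module.Basis.equivFun_self] at hone
  simp at hone

lemma aux_cz
    (B' : Finset (Fin n)) {x : A} (hx : x ∈ Submodule.span ℤ (⇑b '' ↑B'))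
    {m : Fin n} (hm : m ∉ B') : b.equivFun x m = 0 := by
  induction hx using Submodule.span_induction with
  | mem z hz =>
    obtain ⟨i, hi, rfl⟩ := hz
    rw [Module.Basis.equivFun_self]
    have hne : i ≠ m := fun hc => hm (hc ▸ (by simpa using hi))
    simp [hne]
  | zero => simp
  | add x y _ _ h1 h2 => rw [map_add, Pi.add_apply, h1, h2, add_zero]
  | smul g x _ h1 =>
    have : b.equivFun (g • x) = g • b.equivFun x := map_zsmul (b.equivFun : A ≃ₗ[ℂ] (Fin n → ℂ)) g x
    rw [this, Pi.smul_apply, h1, smul_zero]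

lemma aux_hNz
    (hmul : ∀ i j, b i * b j = ∑ m, (N i j m : ℂ) • b m)
    (B' : Finset (Fin n))
    (hclosed : ∀ x ∈ Submodule.span ℤ (⇑b '' ↑B'), ∀ y ∈ Submodule.span ℤ (⇑b '' ↑B'),
      x * y ∈ Submodule.span ℤ (⇑b '' ↑B'))
    {i : Fin n} (hi : i ∈ B') {j : Fin n} (hj : j ∈ B') {m : Fin n} (hm : m ∉ B') :
    N i j m = 0 := by
  have hx : b i ∈ Submodule.span ℤ (⇑b '' ↑B') :=
    Submodule.subset_span ⟨i, by simpa using hi, rfl⟩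
  have hy : b j ∈ Submodule.span ℤ (⇑b '' ↑B') :=
    Submodule.subset_span ⟨j, by simpa using hj, rfl⟩
  have hmem := hclosed _ hx _ hy
  have h0 := aux_cz b B' hmem hm
  rw [aux_c_basis_mul b N hmul] at h0
  exact_mod_cast h0

lemma aux_assoc
    (hmul : ∀ i j, b i * b j = ∑ m, (N i j m : ℂ) • b m) (i j k m : Fin n) :
    (∑ l, N i j l * N l k m) = ∑ l, N j k l * N i l m := by
  have h1 : b.equivFun (b i * b j * b k) m = ∑ l, ((N i j l : ℂ) * N l k m) := by
    rw [aux_c_mul b N hmul]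
    refine Finset.sum_congr rfl fun l _ => ?_
    rw [Finset.sum_eq_single k]
    · rw [aux_c_basis_mul b N hmul, Module.Basis.equivFun_self]
      simp
    · intro c _ hc
      rw [Module.Basis.equivFun_self]
      simp [Ne.symm hc]
    · simp
  have h2 : b.equivFun (b i * (b j * b k)) m = ∑ l, ((N j k l : ℂ) * N i l m) := by
    rw [aux_c_mul b N hmul]
    rw [Finset.sum_eq_single i]
    · refine Finset.sum_congr rfl fun l _ => ?_
      rw [aux_c_basis_mul b N hmul, Module.Basis.equivFun_self]
      simp
    · intro c _ hc
      rw [Module.Basis.equivFun_self]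
      simp [Ne.symm hc]
    · simp
  rw [mul_assoc] at h1
  rw [h2] at h1
  exact_mod_cast h1.symm

lemma aux_one_claim
    (hmul : ∀ i j, b i * b j = ∑ m, (N i j m : ℂ) • b m)
    (hσ : ∀ i, σ (σ i) = i)
    (hτ : ∀ i j, (∑ m, (starRingEnd ℂ) (b.repr 1 m) * (N (σ i) j m : ℂ)) =
      if i = j then (1 : ℂ) else 0)
    (he : ∀ j, (starRingEnd ℂ) (b.repr 1 (σ j)) = b.repr 1 j)
    (B' : Finset (Fin n))
    (hNz : ∀ i ∈ B', ∀ j ∈ B', ∀ m, m ∉ B' → N i j m = 0)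
    (hsig : ∀ j ∈ B', σ j ∈ B')
    {j : Fin n} (hj : j ∈ B') (m : Fin n) :
    (∑ i ∈ B', b.repr 1 i * (N i j m : ℂ)) = if j = m then 1 else 0 := by
  by_cases hm : m ∈ B'
  · have step1 : (∑ i ∈ B', b.repr 1 i * (N i j m : ℂ))
        = ∑ i ∈ B', b.repr 1 i * (N (σ m) j (σ i) : ℂ) := by
      refine Finset.sum_congr rfl fun i _ => ?_
      rw [show N i j m = N (σ m) j (σ i) from aux_hkey b N σ hmul hσ hτ i j m]
    have step2 : (∑ i ∈ B', b.repr 1 i * (N (σ m) j (σ i) : ℂ))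
        = ∑ i ∈ B', b.repr 1 (σ i) * (N (σ m) j i : ℂ) := by
      refine Finset.sum_nbij' σ σ (fun a ha => hsig a ha) (fun a ha => hsig a ha)
        (fun a _ => hσ a) (fun a _ => hσ a) (fun a _ => ?_)
      rw [hσ a]
    have step3 : (∑ i ∈ B', b.repr 1 (σ i) * (N (σ m) j i : ℂ))
        = ∑ i ∈ B', (starRingEnd ℂ) (b.repr 1 i) * (N (σ m) j i : ℂ) := by
      refine Finset.sum_congr rfl fun i _ => ?_
      have hE : b.repr 1 (σ i) = (starRingEnd ℂ) (b.repr 1 i) := by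
        rw [← he i, Complex.conj_conj]
      rw [hE]
    have step4 : (∑ i ∈ B', (starRingEnd ℂ) (b.repr 1 i) * (N (σ m) j i : ℂ))
        = ∑ i, (starRingEnd ℂ) (b.repr 1 i) * (N (σ m) j i : ℂ) := by
      refine Finset.sum_subset (Finset.subset_univ B') fun i _ hi => ?_
      rw [hNz (σ m) (hsig m hm) j hj i hi]
      simp
    rw [step1, step2, step3, step4, hτ m j]
    by_cases hjm : j = m
    · simp [hjm]
    · rw [if_neg (fun h => hjm h.symm), if_neg hjm]
  · have hz : ∀ i ∈ B', b.repr 1 i * (N i j m : ℂ) = 0 := by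
      intro i hi
      rw [hNz i hi j hj m hm]
      simp
    rw [Finset.sum_eq_zero hz]
    have : j ≠ m := fun hc => hm (hc ▸ hj)
    simp [this]

end Aux

/-- Let `(R,B)` be a `ℤ`-based rng and `B' ⊆ B` a closed
subset.  Then `e' := ∑_{i ∈ B'} e_i • b i` is an identity for the `ℂ`-span of
`B'`; consequently the subring spanned by `B'`, with the restrictions of `~`
and `τ`, is itself a `ℤ`-based rng. -/
theorem zBasedRng_closed_subset_is_zBasedRng
    {n : ℕ} (A : Type*) [CommRing A] [Algebra ℂ A]
    (b : Module.Basis (Fin n) ℂ A) (N : Fin n → Fin n → Fin n → ℤ) (σ : Fin n → Fin n)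
    (hmul : ∀ i j, b i * b j = ∑ m, (N i j m : ℂ) • b m)
    (hσ : ∀ i, σ (σ i) = i)
    (hσN : ∀ i j m, N (σ i) (σ j) m = N i j (σ m))
    (hτ : ∀ i j, (∑ m, (starRingEnd ℂ) (b.repr 1 m) * (N (σ i) j m : ℂ)) =
      if i = j then (1 : ℂ) else 0)
    (he : ∀ j, (starRingEnd ℂ) (b.repr 1 (σ j)) = b.repr 1 j)
    (B' : Finset (Fin n))
    (hclosed : ∀ x ∈ Submodule.span ℤ (⇑b '' ↑B'), ∀ y ∈ Submodule.span ℤ (⇑b '' ↑B'),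
      x * y ∈ Submodule.span ℤ (⇑b '' ↑B')) :
    (∀ r ∈ Submodule.span ℂ (⇑b '' ↑B'), (∑ i ∈ B', b.repr 1 i • b i) * r = r) ∧
    ∃ σ' : {x // x ∈ B'} → {x // x ∈ B'},
      (∀ i : {x // x ∈ B'}, (σ' i : Fin n) = σ (i : Fin n)) ∧
      IsZBasedRngData (fun i j m : {x // x ∈ B'} => N i.1 j.1 m.1)
        (fun i : {x // x ∈ B'} => b.repr 1 i.1) σ' := by
  classical
  have hNz : ∀ i ∈ B', ∀ j ∈ B', ∀ m, m ∉ B' → N i j m = 0 :=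
    fun i hi j hj m hm => aux_hNz b N hmul B' hclosed hi hj hm
  have hsig : ∀ j ∈ B', σ j ∈ B' :=
    fun j hj => aux_sigma_mem b N σ hmul hσ hσN hτ he B' hNz hj
  have claim : ∀ j ∈ B', ∀ m,
      (∑ i ∈ B', b.repr 1 i * (N i j m : ℂ)) = if j = m then 1 else 0 :=
    fun j hj m => aux_one_claim b N σ hmul hσ hτ he B' hNz hsig hj m
  constructor
  · have hgen : ∀ j ∈ B', (∑ i ∈ B', b.repr 1 i • b i) * b j = b j := by
      intro j hj
      calc (∑ i ∈ B', b.repr 1 i • b i) * b j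
          = ∑ i ∈ B', b.repr 1 i • (b i * b j) := by
            rw [Finset.sum_mul]
            exact Finset.sum_congr rfl fun i _ => smul_mul_assoc _ _ _
        _ = ∑ i ∈ B', ∑ m, (b.repr 1 i * N i j m) • b m := by
            refine Finset.sum_congr rfl fun i _ => ?_
            rw [hmul i j, Finset.smul_sum]
            exact Finset.sum_congr rfl fun m _ => smul_smul _ _ _
        _ = ∑ m, ∑ i ∈ B', (b.repr 1 i * N i j m) • b m := Finset.sum_comm
        _ = ∑ m, (∑ i ∈ B', b.repr 1 i * N i j m) • b m :=
            Finset.sum_congr rfl fun m _ => (Finset.sum_smul).symm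
        _ = ∑ m, (if j = m then (1:ℂ) else 0) • b m :=
            Finset.sum_congr rfl fun m _ => by rw [claim j hj m]
        _ = b j := by simp
    intro r hr
    induction hr using Submodule.span_induction with
    | mem z hz =>
      obtain ⟨i, hi, rfl⟩ := hz
      exact hgen i (by simpa using hi)
    | zero => rw [mul_zero]
    | add x y _ _ h1 h2 => rw [mul_add, h1, h2]
    | smul c x _ h1 => rw [mul_smul_comm, h1]
  · refine ⟨fun i => ⟨σ i.1, hsig i.1 i.2⟩, fun i => rfl, ?_, ?_, ?_, ?_, ?_, ?_, ?_⟩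
    · exact fun i j m => aux_comm b N hmul i.1 j.1 m.1
    · intro i j k m
      show (∑ l : {x // x ∈ B'}, N i.1 j.1 l.1 * N l.1 k.1 m.1)
          = ∑ l : {x // x ∈ B'}, N j.1 k.1 l.1 * N i.1 l.1 m.1
      rw [Finset.sum_coe_sort B' (fun l => N i.1 j.1 l * N l k.1 m.1),
        Finset.sum_coe_sort B' (fun l => N j.1 k.1 l * N i.1 l m.1)]
      have h3 : (∑ l ∈ B', N i.1 j.1 l * N l k.1 m.1) = ∑ l, N i.1 j.1 l * N l k.1 m.1 := by
        refine Finset.sum_subset (Finset.subset_univ B') fun l _ hl => ?_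
        rw [hNz i.1 i.2 j.1 j.2 l hl, zero_mul]
      have h4 : (∑ l ∈ B', N j.1 k.1 l * N i.1 l m.1) = ∑ l, N j.1 k.1 l * N i.1 l m.1 := by
        refine Finset.sum_subset (Finset.subset_univ B') fun l _ hl => ?_
        rw [hNz j.1 j.2 k.1 k.2 l hl, zero_mul]
      rw [h3, h4]
      exact aux_assoc b N hmul i.1 j.1 k.1 m.1
    · intro j m
      show (∑ i : {x // x ∈ B'}, b.repr 1 i.1 * (N i.1 j.1 m.1 : ℂ))
          = if j = m then 1 else 0
      rw [Finset.sum_coe_sort B' (fun i => b.repr 1 i * (N i j.1 m.1 : ℂ))]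
      rw [claim j.1 j.2 m.1]
      by_cases h : j = m
      · simp [h]
      · have h2 : j.1 ≠ m.1 := fun hc => h (Subtype.ext hc)
        simp [h, h2]
    · exact fun i => Subtype.ext (hσ i.1)
    · exact fun i j m => hσN i.1 j.1 m.1
    · intro i j
      show (∑ m : {x // x ∈ B'}, (starRingEnd ℂ) (b.repr 1 m.1) * (N (σ i.1) j.1 m.1 : ℂ))
          = if i = j then 1 else 0
      rw [Finset.sum_coe_sort B'
        (fun m => (starRingEnd ℂ) (b.repr 1 m) * (N (σ i.1) j.1 m : ℂ))]
      have h2 : (∑ m ∈ B', (starRingEnd ℂ) (b.repr 1 m) * (N (σ i.1) j.1 m : ℂ))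
          = ∑ m, (starRingEnd ℂ) (b.repr 1 m) * (N (σ i.1) j.1 m : ℂ) := by
        refine Finset.sum_subset (Finset.subset_univ B') fun m _ hm => ?_
        rw [hNz (σ i.1) (hsig i.1 i.2) j.1 j.2 m hm]
        simp
      rw [h2, hτ i.1 j.1]
      by_cases h : i = j
      · simp [h]
      · have h2 : i.1 ≠ j.1 := fun hc => h (Subtype.ext hc)
        simp [h, h2]
    · intro j
      show (starRingEnd ℂ) (b.repr 1 (σ j.1)) = b.repr 1 j.1
      exact he j.1
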